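/- (Incremental Lemma, monotonicity of brave reasoning.) Let (D,W) be an NMU default theory, let q be a literal and let S be a set of literals such that W ∪ S is consistent and S does not influence q in (D,W). If q is in some extension of (D,W), then q is in some extension of (D, W ∪ S). -/

import Mathlib

/-! Propositional formulas -/

inductive Form (V : Type) : Type
  | atom : V → Form V
  | tru  : Form V
  | fals : Form V
  | neg  : Form V → Form V
  | conj : Form V → Form V → Form V
  | disj : Form V → Form V → Form V

/-- Satisfaction of a formula by a valuation. -/
def Form.sat {V : Type} (v : V → Prop) : Form V → Prop
  | .atom a => v a
  | .tru => True
  | .fals => False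
  | .neg φ => ¬ Form.sat v φ
  | .conj φ ψ => Form.sat v φ ∧ Form.sat v ψ
  | .disj φ ψ => Form.sat v φ ∨ Form.sat v ψ

/-- Logical logClosure `T*` of a set of formulas. -/
def logClosure {V : Type} (T : Set (Form V)) : Set (Form V) :=
  { φ | ∀ v : V → Prop, (∀ ψ ∈ T, Form.sat v ψ) → Form.sat v φ }

/-- A default rule `α : β₁,…,β_m / γ` (`pre = none` means the prerequisite is missing). -/
structure Default (V : Type) : Type where
  pre   : Option (Form V)
  justs : List (Form V)
  concl : Form V

/-- The stage sets `E_i` relative to a candidate extension `E`: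
`E_0 = W`, `E_{i+1} = E_i* ∪ {γ | α:β₁,…,β_m/γ ∈ D, α ∈ E_i, ¬β₁ ∉ E, …, ¬β_m ∉ E}`. -/
def extStage {V : Type} (D : Set (Default V)) (W : Set (Form V)) (E : Set (Form V)) :
    ℕ → Set (Form V)
  | 0 => W
  | i + 1 =>
      logClosure (extStage D W E i) ∪
        { φ | ∃ d ∈ D, d.concl = φ ∧ (∀ a ∈ d.pre, a ∈ extStage D W E i) ∧
              ∀ b ∈ d.justs, Form.neg b ∉ E }

/-- `E` is an extension of the default theory `(D, W)`. -/
def IsExtension {V : Type} (D : Set (Default V)) (W : Set (Form V)) (E : Set (Form V)) : Prop :=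
  E = ⋃ i, extStage D W E i

/-- `(D, W) ⊨ φ`: every extension of `(D, W)` contains `φ`. -/
def entails {V : Type} (D : Set (Default V)) (W : Set (Form V)) (φ : Form V) : Prop :=
  ∀ E, IsExtension D W E → φ ∈ E

/-! Literals -/

/-- A literal: a letter together with a sign (`pos = true` means a positive literal). -/
structure Lit (V : Type) : Type where
  letter : V
  pos : Bool

/-- The formula corresponding to a literal. -/
def Lit.toForm {V : Type} (l : Lit V) : Form V :=
  if l.pos then Form.atom l.letter else Form.neg (Form.atom l.letter)

/-- Negation of a literal (so that `¬¬a = a`). -/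
def Lit.negate {V : Type} (l : Lit V) : Lit V := ⟨l.letter, !l.pos⟩

/-- A set of literals is consistent if it contains no complementary pair. -/
def LitConsistent {V : Type} (S : Set (Lit V)) : Prop := ∀ l ∈ S, l.negate ∉ S

/-! Normal mixed unary (NMU) default theories -/

/-- An NMU default `α : β / β` with `α` empty or a single literal and `β` a single literal. -/
structure NMUDefault (V : Type) : Type where
  pre : Option (Lit V)
  concl : Lit V

/-- The general default rule corresponding to an NMU default. -/
def NMUDefault.toDefault {V : Type} (d : NMUDefault V) : Default V :=
  ⟨d.pre.map Lit.toForm, [d.concl.toForm], d.concl.toForm⟩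

/-- `E` is an extension of the NMU theory `(D, W)`. -/
def NMU.IsExtension {V : Type} (D : Set (NMUDefault V)) (W : Set (Lit V))
    (E : Set (Form V)) : Prop :=
  _root_.IsExtension (NMUDefault.toDefault '' D) (Lit.toForm '' W) E

/-- The NMU theory `(D, W)` entails the literal `l`. -/
def NMU.entails {V : Type} (D : Set (NMUDefault V)) (W : Set (Lit V)) (l : Lit V) : Prop :=
  _root_.entails (NMUDefault.toDefault '' D) (Lit.toForm '' W) l.toForm

/-- An NMU theory is normal unary (NU) if every nonempty prerequisite is positive. -/
def IsNU {V : Type} (D : Set (NMUDefault V)) : Prop :=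
  ∀ d ∈ D, ∀ p ∈ d.pre, p.pos = true

/-! Atomic dependency graph -/

/-- Edge `(x, y)` of the atomic dependency graph: `x` occurs in the prerequisite and `y`
in the consequent of some default of `D`. -/
def depEdge {V : Type} (D : Set (NMUDefault V)) (x y : V) : Prop :=
  ∃ d ∈ D, (∃ p ∈ d.pre, p.letter = x) ∧ d.concl.letter = y

/-- There is a path from `x` to `y` in the atomic dependency graph. -/
def depReach {V : Type} (D : Set (NMUDefault V)) : V → V → Prop :=
  Relation.ReflTransGen (depEdge D)

/-- A set of literals `S` influences a literal `l`. -/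
def influences {V : Type} (D : Set (NMUDefault V)) (S : Set (Lit V)) (l : Lit V) : Prop :=
  ∃ t ∈ S, depReach D t.letter l.letter

section Aux
variable {V : Type}

lemma subset_logClosure {T : Set (Form V)} : T ⊆ logClosure T :=
  fun φ hφ v hv => hv φ hφ

lemma logClosure_mono {T T' : Set (Form V)} (h : T ⊆ T') : logClosure T ⊆ logClosure T' :=
  fun φ hφ v hv => hφ v fun ψ hψ => hv ψ (h hψ)

lemma logClosure_idem {T : Set (Form V)} : logClosure (logClosure T) ⊆ logClosure T :=
  fun φ hφ v hv => hφ v fun ψ hψ => hψ v hv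

lemma Lit.negate_negate (l : Lit V) : l.negate.negate = l := by
  simp [Lit.negate]

lemma Lit.negate_ne (l : Lit V) : l.negate ≠ l := by
  intro h
  have := congrArg Lit.pos h
  simp [Lit.negate] at this

def litVal (M : Set (Lit V)) : V → Prop := fun a => (⟨a, true⟩ : Lit V) ∈ M

lemma litVal_sat {M : Set (Lit V)} (hM : LitConsistent M) {l : Lit V} (hl : l ∈ M) :
    Form.sat (litVal M) l.toForm := by
  obtain ⟨a, p⟩ := l
  cases p with
  | false =>
      have h1 : (⟨a, true⟩ : Lit V) ∉ M := hM ⟨a, false⟩ hl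
      simpa [Lit.toForm, Form.sat, litVal] using h1
  | true => simpa [Lit.toForm, Form.sat, litVal] using hl

lemma sat_toForm_negate {v : V → Prop} {l : Lit V} (h1 : Form.sat v l.toForm)
    (h2 : Form.sat v l.negate.toForm) : False := by
  obtain ⟨a, p⟩ := l
  cases p <;> simp_all [Lit.toForm, Lit.negate, Form.sat]

lemma mem_of_lit_mem_closure {M : Set (Lit V)} (hM : LitConsistent M) {l : Lit V}
    (h : l.toForm ∈ logClosure (Lit.toForm '' M)) : l ∈ M := by
  by_contra hl
  obtain ⟨a, p⟩ := l
  cases p with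
  | true =>
      have hs := h (litVal M) (by rintro ψ ⟨m, hm, rfl⟩; exact litVal_sat hM hm)
      exact hl (by simpa [Lit.toForm, Form.sat, litVal] using hs)
  | false =>
      have hsat : ∀ ψ ∈ Lit.toForm '' M, Form.sat (fun b => litVal M b ∨ b = a) ψ := by
        rintro ψ ⟨m, hm, rfl⟩
        obtain ⟨b, pb⟩ := m
        cases pb with
        | true => exact Or.inl (by simpa [litVal] using hm)
        | false =>
            have h1 : (⟨b, true⟩ : Lit V) ∉ M := hM ⟨b, false⟩ hm
            have h2 : b ≠ a := fun hba => hl (hba ▸ hm)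
            simp [Lit.toForm, Form.sat, litVal]
            exact ⟨h1, h2⟩
      have hs := h (fun b => litVal M b ∨ b = a) hsat
      simp [Lit.toForm, Form.sat] at hs

lemma lit_mem_closure_iff {M : Set (Lit V)} (hM : LitConsistent M) (l : Lit V) :
    l.toForm ∈ logClosure (Lit.toForm '' M) ↔ l ∈ M :=
  ⟨mem_of_lit_mem_closure hM, fun h => subset_logClosure ⟨l, h, rfl⟩⟩

lemma sat_neg_iff_negate (v : V → Prop) (l : Lit V) :
    Form.sat v (Form.neg l.toForm) ↔ Form.sat v l.negate.toForm := by
  obtain ⟨a, p⟩ := l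
  cases p <;> simp [Lit.toForm, Lit.negate, Form.sat]

lemma neg_mem_closure_iff {M : Set (Lit V)} (hM : LitConsistent M) (l : Lit V) :
    Form.neg l.toForm ∈ logClosure (Lit.toForm '' M) ↔ l.negate ∈ M := by
  rw [← lit_mem_closure_iff hM l.negate]
  constructor <;> intro h v hv
  · exact (sat_neg_iff_negate v l).1 (h v hv)
  · exact (sat_neg_iff_negate v l).2 (h v hv)

lemma extStage_succ_left {D' : Set (Default V)} {W' E : Set (Form V)} (i : ℕ) :
    logClosure (extStage D' W' E i) ⊆ extStage D' W' E (i + 1) :=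
  Set.subset_union_left

lemma extStage_mono {D' : Set (Default V)} {W' E : Set (Form V)} {i j : ℕ} (h : i ≤ j) :
    extStage D' W' E i ⊆ extStage D' W' E j := by
  induction h with
  | refl => exact subset_rfl
  | step _ ih => exact ih.trans (subset_logClosure.trans (extStage_succ_left _))

lemma finite_subset_stage {D' : Set (Default V)} {W' E : Set (Form V)} {T : Set (Form V)}
    (hT : T.Finite) :
    T ⊆ (⋃ i, extStage D' W' E i) → ∃ n, T ⊆ extStage D' W' E n := by
  refine Set.Finite.induction_on (motive := fun T _ => T ⊆ (⋃ i, extStage D' W' E i) → ∃ n, T ⊆ extStage D' W' E n) T hT ?_ ?_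
  · intro _; exact ⟨0, by simp⟩
  · intro a s _ _ ih h
    obtain ⟨n, hn⟩ := ih (fun x hx => h (Set.mem_insert_of_mem a hx))
    obtain ⟨m, hm⟩ := Set.mem_iUnion.1 (h (Set.mem_insert a s))
    exact ⟨max n m, Set.insert_subset (extStage_mono (le_max_right n m) hm)
      (hn.trans (extStage_mono (le_max_left n m)))⟩

end Aux
section Kernels
variable {V : Type}

/-- Grounded derivability of a literal from `W` by defaults of `D`, where the justification
check is made against the literal set `M`. -/
inductive Deriv (D : Set (NMUDefault V)) (W M : Set (Lit V)) : Lit V → Prop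
  | base {l : Lit V} : l ∈ W → Deriv D W M l
  | step {d : NMUDefault V} : d ∈ D → (∀ p ∈ d.pre, Deriv D W M p) →
      d.concl.negate ∉ M → Deriv D W M d.concl

/-- A literal set that generates an extension of `(D, W)`. -/
structure Kernel (D : Set (NMUDefault V)) (W M : Set (Lit V)) : Prop where
  cons : LitConsistent M
  subW : W ⊆ M
  closed : ∀ d ∈ D, (∀ p ∈ d.pre, p ∈ M) → d.concl.negate ∉ M → d.concl ∈ M
  grounded : ∀ l ∈ M, Deriv D W M l

lemma kernel_extension {D : Set (NMUDefault V)} {W M : Set (Lit V)}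
    (hM : Kernel D W M) (hMfin : M.Finite) :
    NMU.IsExtension D W (logClosure (Lit.toForm '' M)) := by
  set E := logClosure (Lit.toForm '' M) with hEdef
  have hstage : ∀ i, extStage (NMUDefault.toDefault '' D) (Lit.toForm '' W) E i ⊆ E := by
    intro i
    induction i with
    | zero => exact (Set.image_mono hM.subW).trans subset_logClosure
    | succ i ih =>
        rintro φ (hφ | hφ)
        · exact logClosure_idem (logClosure_mono ih hφ)
        · obtain ⟨d, ⟨nd, hnd, rfl⟩, hconcl, hpre, hjust⟩ := hφ
          have hp : ∀ p ∈ nd.pre, p ∈ M := by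
            intro p hp
            exact mem_of_lit_mem_closure hM.cons
              (ih (hpre _ (Option.mem_map_of_mem _ hp)))
          have hj : nd.concl.negate ∉ M := by
            intro hneg
            exact hjust nd.concl.toForm (by simp [NMUDefault.toDefault])
              ((neg_mem_closure_iff hM.cons nd.concl).2 hneg)
          rw [← hconcl]
          exact subset_logClosure ⟨nd.concl, hM.closed nd hnd hp hj, rfl⟩
  have hderiv : ∀ l, Deriv D W M l →
      ∃ i, l.toForm ∈ extStage (NMUDefault.toDefault '' D) (Lit.toForm '' W) E i := by
    intro l hl
    induction hl with
    | base h => exact ⟨0, ⟨_, h, rfl⟩⟩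
    | @step nd hd hp hj ih =>
        have hex : ∃ i, ∀ a ∈ (NMUDefault.toDefault nd).pre,
            a ∈ extStage (NMUDefault.toDefault '' D) (Lit.toForm '' W) E i := by
          cases hpre : nd.pre with
          | none => exact ⟨0, by simp [NMUDefault.toDefault, hpre]⟩
          | some p =>
              obtain ⟨i, hi⟩ := ih p (by simp [hpre, Option.mem_def])
              refine ⟨i, ?_⟩
              intro a ha
              have hap : p.toForm = a := by
                simpa [NMUDefault.toDefault, hpre] using ha
              rw [← hap]; exact hi
        obtain ⟨i, hi⟩ := hex
        refine ⟨i + 1, Or.inr ⟨NMUDefault.toDefault nd, ⟨nd, hd, rfl⟩, rfl, hi, ?_⟩⟩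
        intro b hb
        have hbe : b = nd.concl.toForm := by simpa [NMUDefault.toDefault] using hb
        rw [hbe]
        intro hmem
        exact hj ((neg_mem_closure_iff hM.cons nd.concl).1 hmem)
  obtain ⟨n, hn⟩ : ∃ n, Lit.toForm '' M ⊆
      extStage (NMUDefault.toDefault '' D) (Lit.toForm '' W) E n := by
    apply finite_subset_stage (hMfin.image _)
    rintro φ ⟨l, hl, rfl⟩
    exact Set.mem_iUnion.2 (hderiv l (hM.grounded l hl))
  show E = _
  apply Set.Subset.antisymm
  · exact ((logClosure_mono hn).trans (extStage_succ_left n)).trans (Set.subset_iUnion _ (n + 1))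
  · exact Set.iUnion_subset hstage

end Kernels
section LemmaB
variable {V : Type}

lemma extension_kernel {D : Set (NMUDefault V)} {W : Set (Lit V)} {E : Set (Form V)}
    (hWfin : W.Finite) (hDfin : D.Finite) (hWc : LitConsistent W)
    (hE : NMU.IsExtension D W E) :
    ∃ M, Kernel D W M ∧ M.Finite ∧ E = logClosure (Lit.toForm '' M) := by
  have hEeq : E = ⋃ i, extStage (NMUDefault.toDefault '' D) (Lit.toForm '' W) E i := hE
  have hstageE : ∀ i, extStage (NMUDefault.toDefault '' D) (Lit.toForm '' W) E i ⊆ E :=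
    fun i => (Set.subset_iUnion _ i).trans hEeq.symm.subset
  set N : Set (Lit V) := W ∪ {l | ∃ d ∈ D, d.concl = l ∧ (∀ p ∈ d.pre, p.toForm ∈ E) ∧
      Form.neg l.toForm ∉ E} with hNdef
  have hNcases : ∀ l ∈ N, l ∈ W ∨ ∃ d ∈ D, d.concl = l ∧ (∀ p ∈ d.pre, p.toForm ∈ E) ∧
      Form.neg l.toForm ∉ E := fun l hl => hl
  have hNmem : ∀ (d : NMUDefault V), d ∈ D → (∀ p ∈ d.pre, p.toForm ∈ E) →
      Form.neg d.concl.toForm ∉ E → d.concl ∈ N :=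
    fun d hd h1 h2 => Or.inr ⟨d, hd, rfl, h1, h2⟩
  have hWN : W ⊆ N := Set.subset_union_left
  have hNE : Lit.toForm '' N ⊆ E := by
    rintro φ ⟨l, hl, rfl⟩
    rcases hNcases l hl with hl | ⟨d, hd, hconcl, hpre, hneg⟩
    · exact hstageE 0 ⟨l, hl, rfl⟩
    · have hex : ∃ i, ∀ a ∈ (NMUDefault.toDefault d).pre,
          a ∈ extStage (NMUDefault.toDefault '' D) (Lit.toForm '' W) E i := by
        cases hpre' : d.pre with
        | none => exact ⟨0, by simp [NMUDefault.toDefault, hpre']⟩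
        | some p =>
            obtain ⟨i, hi⟩ := Set.mem_iUnion.1 (hEeq.subset (hpre p (by simp [hpre', Option.mem_def])))
            refine ⟨i, ?_⟩
            intro a ha
            have hap : p.toForm = a := by simpa [NMUDefault.toDefault, hpre'] using ha
            rw [← hap]; exact hi
      obtain ⟨i, hi⟩ := hex
      apply hstageE (i + 1)
      refine Or.inr ⟨NMUDefault.toDefault d, ⟨d, hd, rfl⟩, ?_, hi, ?_⟩
      · show d.concl.toForm = l.toForm
        rw [hconcl]
      · intro b hb
        have hbe : b = d.concl.toForm := by simpa [NMUDefault.toDefault] using hb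
        rw [hbe, hconcl]
        exact hneg
  have hNfin : N.Finite := by
    apply (hWfin.union (hDfin.image NMUDefault.concl)).subset
    intro l hl
    rcases hNcases l hl with hl | ⟨d, hd, hconcl, -, -⟩
    · exact Or.inl hl
    · exact Or.inr ⟨d, hd, hconcl⟩
  have hstageN : ∀ i, extStage (NMUDefault.toDefault '' D) (Lit.toForm '' W) E i ⊆
      logClosure (Lit.toForm '' N) := by
    intro i
    induction i with
    | zero => exact (Set.image_mono hWN).trans subset_logClosure
    | succ i ih =>
        rintro φ (hφ | hφ)
        · exact logClosure_idem (logClosure_mono ih hφ)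
        · obtain ⟨d, ⟨nd, hnd, rfl⟩, hconcl, hpre, hjust⟩ := hφ
          have hcN : nd.concl ∈ N := by
            refine hNmem nd hnd ?_ ?_
            · intro p hp
              exact hstageE i (hpre _ (Option.mem_map_of_mem _ hp))
            · exact hjust nd.concl.toForm (by simp [NMUDefault.toDefault])
          rw [← hconcl]
          exact subset_logClosure ⟨nd.concl, hcN, rfl⟩
  have hEclN : E = logClosure (Lit.toForm '' N) := by
    apply Set.Subset.antisymm
    · exact hEeq.subset.trans (Set.iUnion_subset hstageN)
    · obtain ⟨n, hn⟩ := finite_subset_stage (hNfin.image _) (hNE.trans hEeq.subset)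
      exact ((logClosure_mono hn).trans (extStage_succ_left n)).trans (hstageE (n + 1))
  have hNc : LitConsistent N := by
    intro l hl hnl
    have hEuniv : ∀ φ, φ ∈ E := by
      intro φ
      rw [hEclN]
      intro v hv
      exact absurd (hv _ ⟨l, hl, rfl⟩)
        fun h1 => sat_toForm_negate h1 (hv _ ⟨l.negate, hnl, rfl⟩)
    have hlW : ∀ m ∈ N, m ∈ W := by
      intro m hm
      rcases hNcases m hm with hm | ⟨d, hd, hconcl, hpre, hneg⟩
      · exact hm
      · exact absurd (hEuniv _) hneg
    exact hWc l (hlW l hl) (hlW _ hnl)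
  have hKc : LitConsistent {l | l ∈ N ∧ Deriv D W N l} := fun l hl hnl => hNc l hl.1 hnl.1
  have hstageK : ∀ i, extStage (NMUDefault.toDefault '' D) (Lit.toForm '' W) E i ⊆
      logClosure (Lit.toForm '' {l | l ∈ N ∧ Deriv D W N l}) := by
    intro i
    induction i with
    | zero =>
        refine (Set.image_mono ?_).trans subset_logClosure
        exact fun l hl => ⟨hWN hl, .base hl⟩
    | succ i ih =>
        rintro φ (hφ | hφ)
        · exact logClosure_idem (logClosure_mono ih hφ)
        · obtain ⟨d, ⟨nd, hnd, rfl⟩, hconcl, hpre, hjust⟩ := hφ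
          have hnegE : Form.neg nd.concl.toForm ∉ E :=
            hjust nd.concl.toForm (by simp [NMUDefault.toDefault])
          have hnegN : nd.concl.negate ∉ N := by
            intro hneg
            exact hnegE (by rw [hEclN]; exact (neg_mem_closure_iff hNc nd.concl).2 hneg)
          have hpK : ∀ p ∈ nd.pre, p ∈ N ∧ Deriv D W N p := by
            intro p hp
            exact mem_of_lit_mem_closure hKc (ih (hpre _ (Option.mem_map_of_mem _ hp)))
          have hcN : nd.concl ∈ N :=
            hNmem nd hnd (fun p hp => hNE ⟨p, (hpK p hp).1, rfl⟩) hnegE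
          have hcD : Deriv D W N nd.concl := .step hnd (fun p hp => (hpK p hp).2) hnegN
          rw [← hconcl]
          exact subset_logClosure ⟨nd.concl, ⟨hcN, hcD⟩, rfl⟩
  have hNK : ∀ l ∈ N, Deriv D W N l := by
    intro l hl
    have hmem : l.toForm ∈ logClosure (Lit.toForm '' {l | l ∈ N ∧ Deriv D W N l}) := by
      obtain ⟨i, hi⟩ := Set.mem_iUnion.1 (hEeq.subset (hNE ⟨l, hl, rfl⟩))
      exact hstageK i hi
    exact (mem_of_lit_mem_closure hKc hmem).2
  refine ⟨N, ⟨hNc, hWN, ?_, hNK⟩, hNfin, hEclN⟩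
  intro d hd hp hneg
  refine hNmem d hd (fun p hp' => hNE ⟨p, hp p hp', rfl⟩) ?_
  rw [hEclN]
  intro hmem
  exact hneg ((neg_mem_closure_iff hNc d.concl).1 hmem)

end LemmaB
section Main
variable {V : Type}

/-- Derivability from a base set `B` by defaults of `D` whose conclusions lie in `M`. -/
inductive GDeriv (D : Set (NMUDefault V)) (B M : Set (Lit V)) : Lit V → Prop
  | base {l : Lit V} : l ∈ B → GDeriv D B M l
  | step {d : NMUDefault V} : d ∈ D → (∀ p ∈ d.pre, GDeriv D B M p) → d.concl ∈ M →
      GDeriv D B M d.concl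

lemma GDeriv.mono {D : Set (NMUDefault V)} {B M M' : Set (Lit V)} {l : Lit V}
    (hg : GDeriv D B M l) (h : M ⊆ M') : GDeriv D B M' l := by
  induction hg with
  | base hb => exact .base hb
  | step hd _ hc ih => exact .step hd ih (h hc)

theorem incremental_brave {V : Type} (D : Set (NMUDefault V)) (W S : Set (Lit V)) (q : Lit V)
    (hD : D.Finite) (hW : W.Finite) (hS : S.Finite)
    (hcons : LitConsistent (W ∪ S))
    (hinf : ¬ influences D S q)
    (h : ∃ E, NMU.IsExtension D W E ∧ q.toForm ∈ E) :
    ∃ E, NMU.IsExtension D (W ∪ S) E ∧ q.toForm ∈ E := by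
  obtain ⟨E, hE, hq⟩ := h
  have hWc : LitConsistent W := fun l hl hn => hcons l (Or.inl hl) (Or.inl hn)
  obtain ⟨N, hN, hNfin, hEeq⟩ := extension_kernel hW hD hWc hE
  have hqN : q ∈ N := mem_of_lit_mem_closure hN.cons (hEeq ▸ hq)
  set A : Set V := {a | ∃ t ∈ S, depReach D t.letter a} with hAdef
  have hqA : q.letter ∉ A := hinf
  have hSA : ∀ t ∈ S, t.letter ∈ A := fun t ht => ⟨t, ht, Relation.ReflTransGen.refl⟩
  have hedge : ∀ {nd : NMUDefault V}, nd ∈ D → ∀ {p : Lit V}, p ∈ nd.pre →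
      nd.concl.letter ∉ A → p.letter ∉ A := by
    rintro nd hnd p hp hc ⟨t, ht, hr⟩
    exact hc ⟨t, ht, hr.tail ⟨nd, hnd, ⟨p, hp, rfl⟩, rfl⟩⟩
  set base : Set (Lit V) := {l | l ∈ N ∧ l.letter ∉ A} ∪ (W ∪ S) with hbasedef
  have hbaseN : ∀ l ∈ N, l.letter ∉ A → l ∈ base := fun l h1 h2 => Or.inl ⟨h1, h2⟩
  have hbaseWS : W ∪ S ⊆ base := Set.subset_union_right
  have hbasecases : ∀ l ∈ base, (l ∈ N ∧ l.letter ∉ A) ∨ l ∈ W ∪ S := fun l hl => hl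
  have hbc : LitConsistent base := by
    intro l hl hnl
    rcases hbasecases l hl with ⟨hlN, hlA⟩ | hl
    · rcases hbasecases _ hnl with ⟨hnN, -⟩ | (hnW | hnS)
      · exact hN.cons l hlN hnN
      · exact hN.cons l hlN (hN.subW hnW)
      · exact hlA (hSA l.negate hnS)
    · rcases hbasecases _ hnl with ⟨hnN, hnA⟩ | hnl
      · rcases hl with hlW | hlS
        · exact hN.cons l.negate hnN (by rw [Lit.negate_negate]; exact hN.subW hlW)
        · exact hnA (hSA l hlS)
      · exact hcons l hl hnl
  set GoodSet : Set (Set (Lit V)) :=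
    {M | base ⊆ M ∧ LitConsistent M ∧ ∀ l ∈ M, GDeriv D base M l} with hGooddef
  have hbaseGood : base ∈ GoodSet := ⟨subset_rfl, hbc, fun l hl => .base hl⟩
  have hchainUB : ∀ c ⊆ GoodSet, IsChain (· ⊆ ·) c → c.Nonempty →
      ∃ ub ∈ GoodSet, ∀ s ∈ c, s ⊆ ub := by
    intro c hc hchain hne
    refine ⟨⋃₀ c, ⟨?_, ?_, ?_⟩, fun s hs => Set.subset_sUnion_of_mem hs⟩
    · obtain ⟨M0, hM0⟩ := hne
      exact (hc hM0).1.trans (Set.subset_sUnion_of_mem hM0)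
    · rintro l ⟨M1, hM1, hl⟩ ⟨M2, hM2, hnl⟩
      rcases hchain.total hM1 hM2 with h12 | h21
      · exact (hc hM2).2.1 l (h12 hl) hnl
      · exact (hc hM1).2.1 l hl (h21 hnl)
    · rintro l ⟨M1, hM1, hl⟩
      exact ((hc hM1).2.2 l hl).mono (Set.subset_sUnion_of_mem hM1)
  obtain ⟨Mx, hbaseMx, hMxm⟩ := zorn_subset_nonempty GoodSet hchainUB base hbaseGood
  have hMxGood : Mx ∈ GoodSet := hMxm.1
  have hMxMax : ∀ y ∈ GoodSet, Mx ⊆ y → y ⊆ Mx := fun y hy hxy => hMxm.2 hy hxy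
  have hMxc : LitConsistent Mx := hMxGood.2.1
  have hMxg : ∀ l ∈ Mx, GDeriv D base Mx l := hMxGood.2.2
  have hMxB : ∀ l, GDeriv D base Mx l → l.letter ∉ A → l ∈ N := by
    intro l hg
    induction hg with
    | base hb =>
        intro hA'
        rcases hbasecases _ hb with ⟨hN', -⟩ | (hW' | hS')
        · exact hN'
        · exact hN.subW hW'
        · exact absurd (hSA _ hS') hA'
    | @step nd hd hp hc ih =>
        intro hA'
        have hpN : ∀ p ∈ nd.pre, p ∈ N := fun p hp' => ih p hp' (hedge hd hp' hA')
        have hnegN : nd.concl.negate ∉ N := by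
          intro hneg
          exact hMxc nd.concl hc (hbaseMx (hbaseN _ hneg hA'))
        exact hN.closed nd hd hpN hnegN
  have hMxclosed : ∀ d ∈ D, (∀ p ∈ d.pre, p ∈ Mx) → d.concl.negate ∉ Mx → d.concl ∈ Mx := by
    intro nd hnd hp hj
    by_contra hcc
    have hgood : insert nd.concl Mx ∈ GoodSet := by
      refine ⟨hbaseMx.trans (Set.subset_insert _ _), ?_, ?_⟩
      · intro l hl hnl
        rcases Set.mem_insert_iff.1 hl with rfl | hl
        · rcases Set.mem_insert_iff.1 hnl with heq | hnl
          · exact Lit.negate_ne _ heq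
          · exact hj hnl
        · rcases Set.mem_insert_iff.1 hnl with heq | hnl
          · exact hj (by rw [← heq, Lit.negate_negate]; exact hl)
          · exact hMxc l hl hnl
      · intro l hl
        rcases Set.mem_insert_iff.1 hl with rfl | hl
        · exact .step hnd (fun p hp' => (hMxg p (hp p hp')).mono (Set.subset_insert _ _))
            (Set.mem_insert _ _)
        · exact (hMxg l hl).mono (Set.subset_insert _ _)
    exact hcc (hMxMax _ hgood (Set.subset_insert _ _) (Set.mem_insert _ _))
  have hBtrans : ∀ l, Deriv D W N l → l.letter ∉ A → Deriv D (W ∪ S) Mx l := by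
    intro l hl
    induction hl with
    | base hb => exact fun _ => .base (Or.inl hb)
    | @step nd hd hp hj ih =>
        intro hA'
        refine .step hd (fun p hp' => ih p hp' (hedge hd hp' hA')) ?_
        intro hneg
        exact hj (hMxB _ (hMxg _ hneg) hA')
  have hMxg' : ∀ l, GDeriv D base Mx l → Deriv D (W ∪ S) Mx l := by
    intro l hg
    induction hg with
    | @base l' hb =>
        rcases hbasecases _ hb with ⟨hN', hA'⟩ | hWS
        · exact hBtrans l' (hN.grounded l' hN') hA'
        · exact .base hWS
    | step hd _ hc ih => exact .step hd (fun p hp' => ih p hp') (hMxc _ hc)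
  have hK : Kernel D (W ∪ S) Mx :=
    ⟨hMxc, fun l hl => hbaseMx (hbaseWS hl), hMxclosed, fun l hl => hMxg' l (hMxg l hl)⟩
  have hGsub : ∀ l, GDeriv D base Mx l → l ∈ base ∪ (NMUDefault.concl '' D) := by
    intro l hg
    induction hg with
    | base hb => exact Or.inl hb
    | step hd _ _ _ => exact Or.inr ⟨_, hd, rfl⟩
  have hMxfin : Mx.Finite := by
    apply Set.Finite.subset (Set.Finite.union
      (Set.Finite.union (hNfin.subset (fun l (hl : l ∈ N ∧ l.letter ∉ A) => hl.1))
        (hW.union hS)) (hD.image _))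
    intro l hl
    exact hGsub l (hMxg l hl)
  exact ⟨logClosure (Lit.toForm '' Mx), kernel_extension hK hMxfin,
    subset_logClosure ⟨q, hbaseMx (hbaseN q hqN hqA), rfl⟩⟩

end Main
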